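/- Let 0 < α < d < 2α and let g : ℝ^d → [0,∞) be measurable with ∫_{ℝ^d} g(z) |z|^{−α} dz < ∞. Then T^{d/α − 3} ∫_{ℝ^d} g(z) |z|^{−2α} (1 − e^{−T|z|^α})² dz → 0 as T → ∞. -/
import Mathlib


open MeasureTheory Filter

lemma sq_one_sub_exp_neg_le (x : ℝ) (hx : 0 ≤ x) : (1 - Real.exp (-x)) ^ 2 ≤ x := by
  have h1 : 1 + (-x) ≤ Real.exp (-x) := by linarith [Real.add_one_le_exp (-x)]
  have h2 : Real.exp (-x) ≤ 1 := Real.exp_le_one_iff.mpr (by linarith)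
  nlinarith [Real.exp_pos (-x)]

theorem stmt16 (d : ℕ) (α : ℝ) (hα : 0 < α) (hαd : α < (d : ℝ)) (hd2α : (d : ℝ) < 2 * α)
    (g : EuclideanSpace ℝ (Fin d) → ℝ) (hg : Measurable g) (hg0 : ∀ z, 0 ≤ g z)
    (hint : ∫⁻ z, ENNReal.ofReal (g z * ‖z‖ ^ (-α)) < ⊤) :
    Tendsto (fun T : ℝ => T ^ ((d : ℝ) / α - 3) *
        ∫ z, g z * ‖z‖ ^ (-(2 * α)) * (1 - Real.exp (-(T * ‖z‖ ^ α))) ^ 2)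
      atTop (nhds 0) := by
  have hh0 : ∀ z : EuclideanSpace ℝ (Fin d), 0 ≤ g z * ‖z‖ ^ (-α) := fun z =>
    mul_nonneg (hg0 z) (Real.rpow_nonneg (norm_nonneg z) _)
  have hhmeas : Measurable (fun z : EuclideanSpace ℝ (Fin d) => g z * ‖z‖ ^ (-α)) :=
    hg.mul (measurable_norm.pow_const _)
  have hhint : Integrable (fun z : EuclideanSpace ℝ (Fin d) => g z * ‖z‖ ^ (-α)) := by
    refine ⟨hhmeas.aestronglyMeasurable, ?_⟩
    rw [hasFiniteIntegral_iff_ofReal (Filter.Eventually.of_forall hh0)]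
    exact hint
  set C := ∫ z, g z * ‖z‖ ^ (-α) with hCdef
  have hC0 : 0 ≤ C := integral_nonneg hh0
  have hflow : ∀ T z, 0 ≤ g z * ‖z‖ ^ (-(2 * α)) * (1 - Real.exp (-(T * ‖z‖ ^ α))) ^ 2 :=
    fun T z => mul_nonneg (mul_nonneg (hg0 z) (Real.rpow_nonneg (norm_nonneg z) _)) (sq_nonneg _)
  -- pointwise bound for T ≥ 0
  have hptwise : ∀ T : ℝ, 0 ≤ T → ∀ z,
      g z * ‖z‖ ^ (-(2 * α)) * (1 - Real.exp (-(T * ‖z‖ ^ α))) ^ 2 ≤ T * (g z * ‖z‖ ^ (-α)) := by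
    intro T hT z
    rcases eq_or_lt_of_le (norm_nonneg z) with hz | hz
    · rw [← hz, Real.zero_rpow (by linarith : -(2 * α) ≠ 0),
        Real.zero_rpow (by linarith : -α ≠ 0)]
      simp
    · have hr : (0 : ℝ) < ‖z‖ := hz
      have hxnn : 0 ≤ T * ‖z‖ ^ α := mul_nonneg hT (Real.rpow_nonneg hr.le _)
      have key : (1 - Real.exp (-(T * ‖z‖ ^ α))) ^ 2 ≤ T * ‖z‖ ^ α :=
        sq_one_sub_exp_neg_le _ hxnn
      have hrw : ‖z‖ ^ (-(2 * α)) * ‖z‖ ^ α = ‖z‖ ^ (-α) := by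
        rw [← Real.rpow_add hr]; ring_nf
      calc g z * ‖z‖ ^ (-(2 * α)) * (1 - Real.exp (-(T * ‖z‖ ^ α))) ^ 2
          ≤ g z * ‖z‖ ^ (-(2 * α)) * (T * ‖z‖ ^ α) := by
            exact mul_le_mul_of_nonneg_left key
              (mul_nonneg (hg0 z) (Real.rpow_nonneg hr.le _))
        _ = T * (g z * (‖z‖ ^ (-(2 * α)) * ‖z‖ ^ α)) := by ring
        _ = T * (g z * ‖z‖ ^ (-α)) := by rw [hrw]
  have hintle : ∀ T : ℝ, 0 ≤ T →
      (∫ z, g z * ‖z‖ ^ (-(2 * α)) * (1 - Real.exp (-(T * ‖z‖ ^ α))) ^ 2) ≤ T * C := by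
    intro T hT
    have := integral_mono_of_nonneg (Filter.Eventually.of_forall (hflow T))
      (hhint.const_mul T) (Filter.Eventually.of_forall (hptwise T hT))
    rwa [integral_const_mul] at this
  have hexp_neg : (d : ℝ) / α - 2 < 0 := by
    have : (d : ℝ) / α < 2 := (div_lt_iff₀ hα).mpr (by linarith)
    linarith
  have hlim : Tendsto (fun T : ℝ => C * T ^ ((d : ℝ) / α - 2)) atTop (nhds 0) := by
    have := (tendsto_rpow_neg_atTop (by linarith : (0:ℝ) < -((d : ℝ) / α - 2))).const_mul C
    simpa using this
  refine tendsto_of_tendsto_of_tendsto_of_le_of_le' tendsto_const_nhds hlim ?_ ?_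
  · filter_upwards [eventually_ge_atTop (1:ℝ)] with T hT
    exact mul_nonneg (Real.rpow_nonneg (by linarith) _) (integral_nonneg (hflow T))
  · filter_upwards [eventually_ge_atTop (1:ℝ)] with T hT
    have hT0 : (0:ℝ) < T := by linarith
    calc T ^ ((d : ℝ) / α - 3) * ∫ z, g z * ‖z‖ ^ (-(2 * α)) *
          (1 - Real.exp (-(T * ‖z‖ ^ α))) ^ 2
        ≤ T ^ ((d : ℝ) / α - 3) * (T * C) :=
          mul_le_mul_of_nonneg_left (hintle T hT0.le) (Real.rpow_nonneg hT0.le _)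
      _ = C * T ^ ((d : ℝ) / α - 2) := by
          rw [show T * C = T ^ (1:ℝ) * C by rw [Real.rpow_one],
            ← mul_assoc, ← Real.rpow_add hT0]
          ring_nf
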